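/- Let Φ ∈ ℝ^{m×n} and c ∈ ℝ^m. Suppose the set {x ∈ ℝ^n : Φx = c} is nonempty and that every minimizer of ‖x‖₀ over it has exactly s nonzero components, where 1 ≤ s ≤ m. Define c₀ := max over all index sets I ⊆ {1,…,n} with #I = s such that Φ_I has full column rank of max_{i ∈ I} |((Φ_Iᵀ Φ_I)^{−1} Φ_Iᵀ c)_i| (this collection of index sets is nonempty). Then every minimizer x̂ of ‖x‖₀ over {x : Φx = c} satisfies ‖x̂‖_∞ ≤ c₀; consequently, the set of minimizers of ‖x‖₀ over {x : Φx = c} coincides with the set of minimizers of ‖x‖₀ over {x : Φx = c, ‖x‖_∞ ≤ c₀}. -/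

import Mathlib

open Matrix

/-- `‖x‖₀`: the number of nonzero components of `x`. -/
noncomputable def norm0 {n : ℕ} (x : Fin n → ℝ) : ℕ :=
  (Finset.univ.filter (fun i => x i ≠ 0)).card

/-- The submatrix `Φ_I` of `Φ` formed by the columns indexed by `I`. -/
def subCols {m n : ℕ} (Φ : Matrix (Fin m) (Fin n) ℝ) (I : Finset (Fin n)) :
    Matrix (Fin m) ↥I ℝ :=
  Matrix.of fun j i => Φ j i.val

/-- The vector `(Φ_Iᵀ Φ_I)⁻¹ Φ_Iᵀ c`. -/
noncomputable def lsVec {m n : ℕ} (Φ : Matrix (Fin m) (Fin n) ℝ) (I : Finset (Fin n))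
    (c : Fin m → ℝ) : ↥I → ℝ :=
  ((subCols Φ I)ᵀ * subCols Φ I)⁻¹ *ᵥ ((subCols Φ I)ᵀ *ᵥ c)

/-- if every minimizer of `‖·‖₀` over the nonempty set `{x | Φx = c}`
has exactly `s` nonzero components (`1 ≤ s ≤ m`), and `c₀` is the maximum, over index
sets `I` of cardinality `s` whose columns `Φ_I` are linearly independent, of
`max_{i ∈ I} |((Φ_Iᵀ Φ_I)⁻¹ Φ_Iᵀ c)_i|`, then every minimizer `x` satisfies
`‖x‖_∞ ≤ c₀`, and the minimizers over `{x | Φx = c}` coincide with the minimizers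
over `{x | Φx = c, ‖x‖_∞ ≤ c₀}`. -/
theorem stmt_7 {m n : ℕ} (Φ : Matrix (Fin m) (Fin n) ℝ) (c : Fin m → ℝ)
    (hne : ∃ x : Fin n → ℝ, Φ.mulVec x = c)
    (s : ℕ) (hs1 : 1 ≤ s) (hsm : s ≤ m)
    (hmins : ∀ x : Fin n → ℝ, Φ.mulVec x = c →
      (∀ y : Fin n → ℝ, Φ.mulVec y = c → norm0 x ≤ norm0 y) → norm0 x = s)
    (c₀ : ℝ)
    (hc₀ : IsGreatest {r : ℝ | ∃ I : Finset (Fin n), I.card = s ∧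
      LinearIndependent ℝ (fun i : ↥I => fun j : Fin m => Φ j i.val) ∧
      r = ⨆ i : ↥I, |lsVec Φ I c i|} c₀) :
    (∀ x : Fin n → ℝ, Φ.mulVec x = c →
      (∀ y : Fin n → ℝ, Φ.mulVec y = c → norm0 x ≤ norm0 y) → ‖x‖ ≤ c₀) ∧
    {x : Fin n → ℝ | Φ.mulVec x = c ∧
        ∀ y : Fin n → ℝ, Φ.mulVec y = c → norm0 x ≤ norm0 y} =
      {x : Fin n → ℝ | (Φ.mulVec x = c ∧ ‖x‖ ≤ c₀) ∧
        ∀ y : Fin n → ℝ, (Φ.mulVec y = c ∧ ‖y‖ ≤ c₀) → norm0 x ≤ norm0 y} := by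
  classical
  obtain ⟨⟨I₀, hI₀card, _, hI₀eq⟩, hub⟩ := hc₀
  have hc₀0 : 0 ≤ c₀ := by
    have hI₀ne : Nonempty ↥I₀ := by
      rw [Finset.nonempty_coe_sort]
      exact Finset.card_pos.mp (by omega)
    obtain ⟨i⟩ := hI₀ne
    rw [hI₀eq]
    exact le_ciSup_of_le (Set.Finite.bddAbove (Set.finite_range _)) i (abs_nonneg _)
  have key : ∀ x : Fin n → ℝ, Φ.mulVec x = c →
      (∀ y : Fin n → ℝ, Φ.mulVec y = c → norm0 x ≤ norm0 y) → ‖x‖ ≤ c₀ := by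
    intro x hx hmin
    have hxs : norm0 x = s := hmins x hx hmin
    set I : Finset (Fin n) := Finset.univ.filter (fun i => x i ≠ 0) with hI
    have hmem : ∀ i : Fin n, i ∈ I ↔ x i ≠ 0 := by
      intro i; simp [hI]
    have hIcard : I.card = s := hxs
    -- linear independence of the columns on the support of x
    have hli : LinearIndependent ℝ (fun i : ↥I => fun j : Fin m => Φ j i.val) := by
      rw [Fintype.linearIndependent_iff]
      intro g hg
      by_contra hcon
      push_neg at hcon
      obtain ⟨i₀, hi₀⟩ := hcon
      set a : Fin n → ℝ := fun k => if h : k ∈ I then g ⟨k, h⟩ else 0 with ha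
      have hΦa : Φ.mulVec a = 0 := by
        funext j
        have hgj := congr_fun hg j
        simp only [Finset.sum_apply, Pi.smul_apply, smul_eq_mul, Pi.zero_apply] at hgj
        calc Φ.mulVec a j = ∑ k, Φ j k * a k := by
              simp [Matrix.mulVec, dotProduct]
          _ = ∑ k ∈ I, Φ j k * a k := by
              refine (Finset.sum_subset (Finset.subset_univ I) ?_).symm
              intro k _ hk
              simp [ha, hk]
          _ = ∑ i : ↥I, g i * Φ j i.val := by
              rw [← Finset.sum_attach I (fun k => Φ j k * a k)]
              refine Finset.sum_congr rfl fun i _ => ?_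
              simp [ha, i.2, mul_comm]
          _ = 0 := hgj
      set t : ℝ := x i₀.val / g i₀ with ht
      set y : Fin n → ℝ := x - t • a with hy
      have hΦy : Φ.mulVec y = c := by
        simp [hy, Matrix.mulVec_sub, Matrix.mulVec_smul, hΦa, hx]
      have hlt : norm0 y < norm0 x := by
        have hsubset : (Finset.univ.filter (fun k => y k ≠ 0)) ⊆ I.erase i₀.val := by
          intro k hk
          simp only [Finset.mem_filter, Finset.mem_univ, true_and] at hk
          rw [Finset.mem_erase]
          constructor
          · intro hki
            apply hk
            have ha0 : a i₀.val = g i₀ := by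
              simp [ha, i₀.2]
            rw [hki]
            simp [hy, ha0, ht, div_mul_cancel₀ (x i₀.val) hi₀]
          · by_contra hkI
            apply hk
            have hx0 : x k = 0 := by
              by_contra h0
              exact hkI ((hmem k).mpr h0)
            have ha0 : a k = 0 := by simp [ha, hkI]
            simp [hy, hx0, ha0]
        calc norm0 y ≤ (I.erase i₀.val).card := Finset.card_le_card hsubset
          _ < I.card := Finset.card_erase_lt_of_mem i₀.2
          _ = norm0 x := rfl
      exact absurd (hmin y hΦy) (not_le.mpr hlt)
    -- least squares vector equals x on I
    set A := subCols Φ I with hA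
    set xI : ↥I → ℝ := fun i => x i.val with hxI
    have hAx : A *ᵥ xI = c := by
      funext j
      calc (A *ᵥ xI) j = ∑ i : ↥I, Φ j i.val * x i.val := by
            simp [Matrix.mulVec, dotProduct, hA, subCols, hxI]
        _ = ∑ k ∈ I, Φ j k * x k := (Finset.sum_attach I (fun k => Φ j k * x k))
        _ = ∑ k, Φ j k * x k := by
            refine Finset.sum_subset (Finset.subset_univ I) ?_
            intro k _ hk
            have : x k = 0 := by
              by_contra h0; exact hk ((hmem k).mpr h0)
            simp [this]
        _ = c j := by rw [← hx]; simp [Matrix.mulVec, dotProduct]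
    have hinjA : Function.Injective A.mulVec := Matrix.mulVec_injective_iff.mpr hli
    have hker : LinearMap.ker (Aᵀ * A).mulVecLin = ⊥ := by
      rw [Matrix.ker_mulVecLin_transpose_mul_self, LinearMap.ker_eq_bot]
      exact hinjA
    have hinj2 : Function.Injective (Aᵀ * A).mulVec := by
      rw [← Matrix.coe_mulVecLin]
      exact LinearMap.ker_eq_bot.mp hker
    have hU : IsUnit (Aᵀ * A) := Matrix.mulVec_injective_iff_isUnit.mp hinj2
    have hinv : (Aᵀ * A)⁻¹ * (Aᵀ * A) = 1 :=
      Matrix.nonsing_inv_mul _ ((Matrix.isUnit_iff_isUnit_det _).mp hU)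
    have hls : lsVec Φ I c = xI := by
      rw [lsVec, ← hA, ← hAx, Matrix.mulVec_mulVec, Matrix.mulVec_mulVec, Matrix.mul_assoc,
        hinv, Matrix.one_mulVec]
    have hrmem : (⨆ i : ↥I, |lsVec Φ I c i|) ≤ c₀ :=
      hub ⟨I, hIcard, hli, rfl⟩
    rw [pi_norm_le_iff_of_nonneg hc₀0]
    intro i
    by_cases hiI : i ∈ I
    · have : |x i| = |lsVec Φ I c ⟨i, hiI⟩| := by rw [hls]
      calc ‖x i‖ = |x i| := rfl
        _ = |lsVec Φ I c ⟨i, hiI⟩| := this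
        _ ≤ ⨆ i : ↥I, |lsVec Φ I c i| :=
            le_ciSup (f := fun i : ↥I => |lsVec Φ I c i|)
              (Set.Finite.bddAbove (Set.finite_range _)) ⟨i, hiI⟩
        _ ≤ c₀ := hrmem
    · have : x i = 0 := by
        by_contra h0; exact hiI ((hmem i).mpr h0)
      simp [this, hc₀0]
  refine ⟨key, ?_⟩
  ext x
  simp only [Set.mem_setOf_eq]
  constructor
  · rintro ⟨hx, hmin⟩
    exact ⟨⟨hx, key x hx hmin⟩, fun y hy => hmin y hy.1⟩
  · rintro ⟨⟨hx, hxc⟩, hmin⟩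
    refine ⟨hx, fun y hy => ?_⟩
    have hS : ∃ k : ℕ, ∃ z : Fin n → ℝ, Φ.mulVec z = c ∧ norm0 z = k := by
      obtain ⟨z, hz⟩ := hne
      exact ⟨norm0 z, z, hz, rfl⟩
    obtain ⟨z, hz, hzk⟩ := Nat.find_spec hS
    have hzmin : ∀ w : Fin n → ℝ, Φ.mulVec w = c → norm0 z ≤ norm0 w := by
      intro w hw
      rw [hzk]
      exact Nat.find_min' hS ⟨w, hw, rfl⟩
    exact le_trans (hmin z ⟨hz, key z hz hzmin⟩) (hzmin y hy)
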